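/- For any $(a_1,\ldots,a_m) \in \mathbb{C}^m$ there exist unique $(a_{m+1},\ldots,a_{2m}) \in \mathbb{C}^m$ such that $a_{2m}\lambda^{2m} + \cdots + a_1\lambda + 1$ is the square of a polynomial of degree at most $m$ with constant term 1. Consequently, the set of ECO polynomials of degree $2m$ with constant term 1, viewed inside the affine space $\mathbb{A}^{2m}$ of coefficient tuples $(a_1,\ldots,a_{2m})$, is the graph of a polynomial map $\mathbb{C}^m \to \mathbb{C}^m$ and in particular is isomorphic to $\mathbb{C}^m$ as an affine variety. -/

import Mathlib

open Polynomial Finset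

noncomputable def cf (m : ℕ) : ℕ → MvPolynomial (Fin m) ℂ
  | 0 => 1
  | (j+1) =>
      if h : j < m then
        (MvPolynomial.X ⟨j, h⟩ -
          ∑ i ∈ (Finset.Ioo 0 (j+1)).attach, cf m i.1 * cf m (j+1-i.1)) * MvPolynomial.C (2⁻¹ : ℂ)
      else 0
  decreasing_by
    all_goals
      have := Finset.mem_Ioo.mp i.2
      omega

lemma cf_zero (m : ℕ) : cf m 0 = 1 := by unfold cf; rfl

lemma cf_succ (m j : ℕ) (h : j < m) :
    cf m (j+1) = (MvPolynomial.X ⟨j, h⟩ -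
      ∑ i ∈ Finset.Ioo 0 (j+1), cf m i * cf m (j+1-i)) * MvPolynomial.C (2⁻¹ : ℂ) := by
  rw [cf, dif_pos h, Finset.sum_attach (Finset.Ioo 0 (j+1)) (fun i => cf m i * cf m (j+1-i))]

lemma cf_top (m j : ℕ) (h : m < j) : cf m j = 0 := by
  cases j with
  | zero => omega
  | succ j => rw [cf, dif_neg (by omega)]

noncomputable def Rpoly (m : ℕ) : Polynomial (MvPolynomial (Fin m) ℂ) :=
  ∑ j ∈ Finset.range (m+1), Polynomial.C (cf m j) * Polynomial.X ^ j

lemma coeff_Rpoly (m n : ℕ) : (Rpoly m).coeff n = cf m n := by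
  rw [Rpoly, Polynomial.finset_sum_coeff]
  simp only [Polynomial.coeff_C_mul, Polynomial.coeff_X_pow, mul_ite, mul_one, mul_zero]
  by_cases h : n < m + 1
  · rw [Finset.sum_eq_single n]
    · simp
    · intro b _ hb; simp [Ne.symm hb]
    · intro hn; exact absurd (Finset.mem_range.mpr h) hn
  · rw [Finset.sum_eq_zero, cf_top m n (by omega)]
    intro b hb
    have := Finset.mem_range.mp hb
    simp [show ¬ n = b by omega]

lemma natDegree_Rpoly (m : ℕ) : (Rpoly m).natDegree ≤ m := by
  apply Polynomial.natDegree_sum_le_of_forall_le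
  intro j hj
  exact (Polynomial.natDegree_C_mul_X_pow_le _ _).trans (by have := Finset.mem_range.mp hj; omega)

lemma sq_coeff (m n : ℕ) :
    (Rpoly m ^ 2).coeff n = ∑ i ∈ Finset.range (n+1), cf m i * cf m (n - i) := by
  rw [sq, Polynomial.coeff_mul, Finset.Nat.sum_antidiagonal_eq_sum_range_succ_mk]
  simp [coeff_Rpoly]

lemma sq_coeff_zero (m : ℕ) : (Rpoly m ^ 2).coeff 0 = 1 := by
  simp [sq_coeff, cf_zero]

lemma sq_coeff_low (m j : ℕ) (h : j < m) :
    (Rpoly m ^ 2).coeff (j+1) = MvPolynomial.X ⟨j, h⟩ := by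
  rw [sq_coeff]
  rw [Finset.range_eq_Ico, Finset.sum_eq_sum_Ico_succ_bot (by omega),
    show j + 1 + 1 = (j+1) + 1 from rfl, Finset.sum_Ico_succ_top (by omega),
    Finset.Ico_add_one_left_eq_Ioo]
  simp only [Nat.sub_zero, Nat.sub_self, cf_zero, one_mul, mul_one]
  rw [cf_succ m j h]
  have h2 : (MvPolynomial.C (2⁻¹:ℂ) : MvPolynomial (Fin m) ℂ) + MvPolynomial.C 2⁻¹ = 1 := by
    rw [← MvPolynomial.C_add]; norm_num
  linear_combination (MvPolynomial.X ⟨j,h⟩ -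
    ∑ i ∈ Finset.Ioo 0 (j+1), cf m i * cf m (j+1-i)) * h2

lemma sum_range_split {R : Type*} [CommRing R] (n : ℕ) (h : 1 ≤ n) (f : ℕ → R) :
    ∑ i ∈ Finset.range (n+1), f i = f 0 + (∑ i ∈ Finset.Ico 1 n, f i) + f n := by
  rw [Finset.sum_range_succ, Finset.range_eq_Ico, Finset.sum_eq_sum_Ico_succ_bot (by omega)]

lemma sq_det (m : ℕ) (r r' : Polynomial ℂ) (hr : r.natDegree ≤ m) (hr' : r'.natDegree ≤ m)
    (h0 : r.coeff 0 = 1) (h0' : r'.coeff 0 = 1)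
    (hlow : ∀ j ≤ m, (r^2).coeff j = (r'^2).coeff j) : r = r' := by
  ext n
  induction n using Nat.strong_induction_on with
  | _ n IH =>
  rcases Nat.eq_zero_or_pos n with h | h
  · subst h; exact h0.trans h0'.symm
  by_cases hn : m < n
  · rw [Polynomial.coeff_eq_zero_of_natDegree_lt (lt_of_le_of_lt hr hn),
      Polynomial.coeff_eq_zero_of_natDegree_lt (lt_of_le_of_lt hr' hn)]
  push_neg at hn
  have key := hlow n hn
  rw [sq, Polynomial.coeff_mul, Finset.Nat.sum_antidiagonal_eq_sum_range_succ_mk,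
    sq, Polynomial.coeff_mul, Finset.Nat.sum_antidiagonal_eq_sum_range_succ_mk,
    sum_range_split n h (fun i => r.coeff i * r.coeff (n - i)),
    sum_range_split n h (fun i => r'.coeff i * r'.coeff (n - i))] at key
  have hmid : ∑ i ∈ Finset.Ico 1 n, r.coeff i * r.coeff (n-i)
      = ∑ i ∈ Finset.Ico 1 n, r'.coeff i * r'.coeff (n-i) := by
    apply Finset.sum_congr rfl
    intro i hi
    have := Finset.mem_Ico.mp hi
    rw [IH i (by omega), IH (n-i) (by omega)]
  simp only [Nat.sub_zero, Nat.sub_self] at key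
  rw [h0, h0', hmid] at key
  linear_combination key / 2

lemma coeff_sum_shift (m s n : ℕ) (a : Fin m → ℂ) :
    (∑ k : Fin m, Polynomial.C (a k) * Polynomial.X ^ (s + k.1)).coeff n =
      if h : s ≤ n ∧ n < s + m then a ⟨n - s, by omega⟩ else 0 := by
  rw [Polynomial.finset_sum_coeff]
  simp only [Polynomial.coeff_C_mul, Polynomial.coeff_X_pow, mul_ite, mul_one, mul_zero]
  split
  · next h =>
    rw [Finset.sum_eq_single (⟨n - s, by omega⟩ : Fin m)]
    · rw [if_pos (show n = s + (n - s) by omega)]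
    · intro b _ hb
      have hb' : ¬ n = s + b.1 := by
        intro hc; apply hb; apply Fin.ext; simp; omega
      simp [hb']
    · simp
  · next h =>
    apply Finset.sum_eq_zero
    intro b _
    have hb : ¬ n = s + b.1 := by have := b.2; omega
    simp [hb]

lemma coeff_f (m : ℕ) (a b : Fin m → ℂ) (n : ℕ) :
    ((1 : Polynomial ℂ) + (∑ k : Fin m, Polynomial.C (a k) * Polynomial.X ^ (k.1 + 1))
      + (∑ k : Fin m, Polynomial.C (b k) * Polynomial.X ^ (m + 1 + k.1))).coeff n =
    (if n = 0 then 1 else 0) + (if h : 1 ≤ n ∧ n < 1 + m then a ⟨n - 1, by omega⟩ else 0)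
      + (if h : m+1 ≤ n ∧ n < m+1+m then b ⟨n - (m+1), by omega⟩ else 0) := by
  have e1 : (∑ k : Fin m, Polynomial.C (a k) * Polynomial.X ^ (k.1 + 1))
      = ∑ k : Fin m, Polynomial.C (a k) * Polynomial.X ^ (1 + k.1) := by
    apply Finset.sum_congr rfl; intro k _; rw [Nat.add_comm]
  rw [Polynomial.coeff_add, Polynomial.coeff_add, e1, coeff_sum_shift, coeff_sum_shift,
    Polynomial.coeff_one]

lemma core (m : ℕ) (a b : Fin m → ℂ) :
    (∃ r : Polynomial ℂ, r.natDegree ≤ m ∧ r.coeff 0 = 1 ∧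
        1 + (∑ k : Fin m, Polynomial.C (a k) * Polynomial.X ^ (k.1 + 1))
          + (∑ k : Fin m, Polynomial.C (b k) * Polynomial.X ^ (m + 1 + k.1)) = r ^ 2) ↔
      b = fun k => MvPolynomial.eval a ((Rpoly m ^ 2).coeff (m + 1 + k.1)) := by
  set rA := (Rpoly m).map (MvPolynomial.eval a) with hrA
  have hAdeg : rA.natDegree ≤ m := (Polynomial.natDegree_map_le).trans (natDegree_Rpoly m)
  have hA0 : rA.coeff 0 = 1 := by
    rw [hrA, Polynomial.coeff_map, coeff_Rpoly, cf_zero, map_one]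
  have hAsq : ∀ n, (rA ^ 2).coeff n = MvPolynomial.eval a ((Rpoly m ^ 2).coeff n) := by
    intro n
    rw [hrA, ← Polynomial.map_pow, Polynomial.coeff_map]
  constructor
  · rintro ⟨r, hdeg, h0, heq⟩
    have hre : r = rA := by
      apply sq_det m r rA hdeg hAdeg h0 hA0
      intro j hj
      rw [← heq, coeff_f, hAsq]
      rcases Nat.eq_zero_or_pos j with h | h
      · subst h; rw [sq_coeff_zero]; simp
      · obtain ⟨j', rfl⟩ : ∃ j', j = j' + 1 := ⟨j - 1, by omega⟩
        rw [sq_coeff_low m j' (by omega)]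
        rw [if_neg (by omega), dif_pos (⟨by omega, by omega⟩ : 1 ≤ j'+1 ∧ j'+1 < 1 + m),
          dif_neg (by omega)]
        simp [MvPolynomial.eval_X]
    funext k
    have hbk : b k = (1 + (∑ k : Fin m, Polynomial.C (a k) * Polynomial.X ^ (k.1 + 1))
          + (∑ k : Fin m, Polynomial.C (b k) * Polynomial.X ^ (m + 1 + k.1))).coeff (m+1+k.1) := by
      rw [coeff_f, if_neg (by omega), dif_neg (by omega),
        dif_pos (⟨by omega, by have := k.2; omega⟩ : m+1 ≤ m+1+k.1 ∧ m+1+k.1 < m+1+m)]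
      have he : (⟨m+1+k.1 - (m+1), by have := k.2; omega⟩ : Fin m) = k := by
        apply Fin.ext; simp
      rw [he]
      ring
    rw [hbk, heq, hre, hAsq]
  · intro hb
    refine ⟨rA, hAdeg, hA0, ?_⟩
    have h2deg : (Rpoly m ^ 2).natDegree ≤ 2 * m :=
      (Polynomial.natDegree_pow_le).trans (by have := natDegree_Rpoly m; omega)
    ext n
    rw [coeff_f, hAsq]
    by_cases h0n : n = 0
    · subst h0n; rw [sq_coeff_zero]; simp
    by_cases h1 : n ≤ m
    · obtain ⟨j', rfl⟩ : ∃ j', n = j' + 1 := ⟨n - 1, by omega⟩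
      rw [sq_coeff_low m j' (by omega)]
      rw [if_neg (by omega), dif_pos (⟨by omega, by omega⟩ : 1 ≤ j'+1 ∧ j'+1 < 1 + m),
        dif_neg (by omega)]
      simp [MvPolynomial.eval_X]
    by_cases h2 : n ≤ 2*m
    · rw [if_neg h0n, dif_neg (by omega),
        dif_pos (⟨by omega, by omega⟩ : m+1 ≤ n ∧ n < m+1+m), hb]
      have he : m + 1 + ((⟨n - (m+1), by omega⟩ : Fin m) : ℕ) = n := by simp; omega
      simp only []
      rw [he]
      ring
    · rw [if_neg h0n, dif_neg (by omega), dif_neg (by omega),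
        Polynomial.coeff_eq_zero_of_natDegree_lt (lt_of_le_of_lt h2deg (by omega)), map_zero]
      ring

theorem stmt3 (m : ℕ) (hm : 1 ≤ m) :
    (∀ a : Fin m → ℂ, ∃! b : Fin m → ℂ,
      ∃ r : Polynomial ℂ, r.natDegree ≤ m ∧ r.coeff 0 = 1 ∧
        1 + (∑ k : Fin m, Polynomial.C (a k) * Polynomial.X ^ (k.1 + 1))
          + (∑ k : Fin m, Polynomial.C (b k) * Polynomial.X ^ (m + 1 + k.1)) = r ^ 2) ∧
    ∃ P : Fin m → MvPolynomial (Fin m) ℂ, ∀ a b : Fin m → ℂ,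
      ((∃ r : Polynomial ℂ, r.natDegree ≤ m ∧ r.coeff 0 = 1 ∧
        1 + (∑ k : Fin m, Polynomial.C (a k) * Polynomial.X ^ (k.1 + 1))
          + (∑ k : Fin m, Polynomial.C (b k) * Polynomial.X ^ (m + 1 + k.1)) = r ^ 2) ↔
        b = fun k => MvPolynomial.eval a (P k)) := by
  constructor
  · intro a
    refine ⟨fun k => MvPolynomial.eval a ((Rpoly m ^ 2).coeff (m + 1 + k.1)),
      (core m a _).mpr rfl, ?_⟩
    intro b hb
    exact (core m a b).mp hb
  · exact ⟨fun k => (Rpoly m ^ 2).coeff (m + 1 + k.1), fun a b => core m a b⟩
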